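/- Let n be an even positive integer and let H be a graph that does not contain a connected matching of size n/2. Then e(H) ≤ ((n−2)/2)·v(H). -/

import Mathlib

/-- A connected matching of size `m` in `G`: a set of `m` pairwise disjoint edges of `G`,
all lying in the same connected component of `G`. -/
def HasConnectedMatching {V : Type*} (G : SimpleGraph V) (m : ℕ) : Prop :=
  ∃ M : Finset (Sym2 V), M.card = m ∧ (∀ e ∈ M, e ∈ G.edgeSet) ∧
    (∀ e ∈ M, ∀ f ∈ M, e ≠ f → ∀ v : V, v ∈ e → v ∉ f) ∧
    ∃ c : G.ConnectedComponent, ∀ e ∈ M, ∀ v ∈ e, G.connectedComponentMk v = c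

open Finset

section Helpers

attribute [local instance] Classical.propDecidable

variable {V : Type*} [Fintype V]

/-- edges of `G` with all endpoints in `S` -/
noncomputable def cmES (G : SimpleGraph V) (S : Finset V) : Finset (Sym2 V) :=
  univ.filter (fun e => e ∈ G.edgeSet ∧ ∀ v ∈ e, v ∈ S)

/-- pairwise vertex-disjointness -/
def cmDisj {V : Type*} (M : Finset (Sym2 V)) : Prop :=
  ∀ e ∈ M, ∀ f ∈ M, e ≠ f → ∀ v : V, v ∈ e → v ∉ f

lemma mem_cmES {G : SimpleGraph V} {S : Finset V} {e : Sym2 V} :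
    e ∈ cmES G S ↔ e ∈ G.edgeSet ∧ ∀ v ∈ e, v ∈ S := by
  simp [cmES]

lemma mem_cmES' {G : SimpleGraph V} {S : Finset V} {a b : V} :
    s(a, b) ∈ cmES G S ↔ G.Adj a b ∧ a ∈ S ∧ b ∈ S := by
  rw [mem_cmES]
  constructor
  · rintro ⟨h1, h2⟩
    exact ⟨h1, h2 a (Sym2.mem_mk_left a b), h2 b (Sym2.mem_mk_right a b)⟩
  · rintro ⟨h1, h2, h3⟩
    refine ⟨h1, ?_⟩
    intro v hv
    rcases Sym2.mem_iff.1 hv with rfl | rfl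
    · exact h2
    · exact h3

lemma cmES_mono {G : SimpleGraph V} {S T : Finset V} (h : S ⊆ T) :
    cmES G S ⊆ cmES G T := by
  intro e he
  rw [mem_cmES] at he ⊢
  exact ⟨he.1, fun v hv => h (he.2 v hv)⟩

lemma cmDisj_mono {V : Type*} {M N : Finset (Sym2 V)} (h : M ⊆ N) (hN : cmDisj N) :
    cmDisj M :=
  fun e he f hf hne v hv => hN e (h he) f (h hf) hne v hv

lemma cmDisj_insert {V : Type*} {M : Finset (Sym2 V)} {g : Sym2 V} (hM : cmDisj M)
    (hg : ∀ f ∈ M, ∀ v ∈ g, v ∉ f) : cmDisj (insert g M) := by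
  intro e he f hf hne v hv hvf
  rcases Finset.mem_insert.1 he with he' | he'
  · rcases Finset.mem_insert.1 hf with hf' | hf'
    · exact hne (he'.trans hf'.symm)
    · exact hg f hf' v (he' ▸ hv) hvf
  · rcases Finset.mem_insert.1 hf with hf' | hf'
    · exact hg e he' v (hf' ▸ hvf) hv
    · exact hM e he' f hf' hne v hv hvf

/-- every edge, seen as a set of vertices, has exactly two elements -/
lemma cm_card_verts {G : SimpleGraph V} {e : Sym2 V} (he : e ∈ G.edgeSet) :
    (univ.filter (fun v => v ∈ e)).card = 2 := by
  induction e using Sym2.ind with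
  | _ a b =>
    have hab : a ≠ b := (G.mem_edgeSet.1 he).ne
    have : (univ.filter (fun v => v ∈ s(a, b))) = {a, b} := by
      ext v
      simp [Sym2.mem_iff]
    rw [this, Finset.card_pair hab]

end Helpers

section Helpers2

attribute [local instance] Classical.propDecidable

variable {V : Type*} [Fintype V]

/-- number of neighbours of `u` inside `S` -/
noncomputable def cmDeg (G : SimpleGraph V) (S : Finset V) (u : V) : ℕ :=
  (S.filter (fun w => G.Adj u w)).card

lemma cmES_card_le_erase (G : SimpleGraph V) (S : Finset V) (u : V) :
    (cmES G S).card ≤ (cmES G (S.erase u)).card + cmDeg G S u := by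
  have hsub : cmES G S ⊆ cmES G (S.erase u) ∪ (cmES G S).filter (fun e => u ∈ e) := by
    intro e he
    by_cases hue : u ∈ e
    · exact Finset.mem_union_right _ (Finset.mem_filter.2 ⟨he, hue⟩)
    · refine Finset.mem_union_left _ ?_
      rw [mem_cmES] at he ⊢
      refine ⟨he.1, fun v hv => Finset.mem_erase.2 ⟨?_, he.2 v hv⟩⟩
      rintro rfl; exact hue hv
  have h2 : ((cmES G S).filter (fun e => u ∈ e)).card ≤ cmDeg G S u := by
    refine Finset.card_le_card_of_surjOn (fun w => s(u, w)) ?_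
    intro e he
    simp only [Finset.coe_filter, Set.mem_setOf_eq] at he
    obtain ⟨hes, hue⟩ := he
    obtain ⟨w, rfl⟩ := Sym2.mem_iff_exists.1 hue
    rw [mem_cmES'] at hes
    refine ⟨w, ?_, rfl⟩
    simp only [Finset.coe_filter, Set.mem_setOf_eq]
    exact ⟨hes.2.2, hes.1⟩
  calc (cmES G S).card ≤ (cmES G (S.erase u) ∪ (cmES G S).filter (fun e => u ∈ e)).card :=
        Finset.card_le_card hsub
    _ ≤ (cmES G (S.erase u)).card + ((cmES G S).filter (fun e => u ∈ e)).card :=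
        Finset.card_union_le _ _
    _ ≤ _ := by omega

/-- handshake bound -/
lemma cmES_card_handshake (G : SimpleGraph V) (S : Finset V) :
    2 * (cmES G S).card ≤ S.card * (S.card - 1) := by
  classical
  let GS : SimpleGraph V :=
    { Adj := fun x y => G.Adj x y ∧ x ∈ S ∧ y ∈ S
      symm := by constructor; rintro x y ⟨h1, h2, h3⟩; exact ⟨h1.symm, h3, h2⟩
      loopless := by constructor; rintro x ⟨h1, -⟩; exact G.irrefl h1 }
  have hEF : GS.edgeFinset = cmES G S := by
    ext e
    induction e using Sym2.ind with
    | _ a b =>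
      rw [SimpleGraph.mem_edgeFinset, GS.mem_edgeSet, mem_cmES']
  have hdeg : ∀ v : V, GS.degree v ≤ if v ∈ S then S.card - 1 else 0 := by
    intro v
    by_cases hv : v ∈ S
    · simp only [hv, if_true]
      have : GS.neighborFinset v ⊆ S.erase v := by
        intro w hw
        rw [SimpleGraph.mem_neighborFinset] at hw
        exact Finset.mem_erase.2 ⟨(hw.1.ne).symm, hw.2.2⟩
      calc GS.degree v ≤ (S.erase v).card := Finset.card_le_card this
        _ = S.card - 1 := Finset.card_erase_of_mem hv
    · simp only [hv, if_false]
      rw [Nat.le_zero, SimpleGraph.degree, Finset.card_eq_zero]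
      ext w
      simp only [SimpleGraph.mem_neighborFinset, Finset.notMem_empty, iff_false]
      rintro ⟨-, h2, -⟩
      exact hv h2
  have hsum := GS.sum_degrees_eq_twice_card_edges
  have : ∑ v : V, GS.degree v ≤ S.card * (S.card - 1) := by
    calc ∑ v : V, GS.degree v ≤ ∑ v : V, (if v ∈ S then S.card - 1 else 0) :=
          Finset.sum_le_sum (fun v _ => hdeg v)
      _ = ∑ v ∈ univ ∩ S, (S.card - 1) := Finset.sum_ite_mem _ _ _
      _ = S.card * (S.card - 1) := by rw [Finset.univ_inter, Finset.sum_const, smul_eq_mul]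
  rw [hEF] at hsum
  omega
end Helpers2

section Helpers3

attribute [local instance] Classical.propDecidable

variable {V : Type*} [Fintype V]

lemma cmKey (G : SimpleGraph V) (s : ℕ) :
    ∀ S : Finset V, (∀ M ⊆ cmES G S, cmDisj M → M.card ≤ s) →
      (cmES G S).card ≤ s * S.card := by
  intro S
  induction S using Finset.strongInduction with
  | _ S IH =>
  intro hmatch
  by_cases hsmall : S.card ≤ 2 * s + 1
  · have h1 := cmES_card_handshake G S
    have h2 : S.card - 1 ≤ 2 * s := by omega
    have h3 : S.card * (S.card - 1) ≤ S.card * (2 * s) := Nat.mul_le_mul_left _ h2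
    have h4 : S.card * (2 * s) = 2 * (s * S.card) := by ring
    omega
  by_cases hbig : ∃ u ∈ S, cmDeg G S u ≤ s
  · obtain ⟨u, hu, hdu⟩ := hbig
    have hssub : S.erase u ⊂ S := Finset.erase_ssubset hu
    have ih := IH _ hssub
      (fun M hM hd => hmatch M (hM.trans (cmES_mono (Finset.erase_subset u S))) hd)
    have h3 := cmES_card_le_erase G S u
    rw [Finset.card_erase_of_mem hu] at ih
    obtain ⟨c, hc⟩ : ∃ c, S.card = c + 1 :=
      ⟨S.card - 1, by have := Finset.card_pos.2 ⟨u, hu⟩; omega⟩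
    have harith : s * (S.card - 1) + s = s * S.card := by
      rw [hc]; simp [Nat.mul_succ]
    omega
  push_neg at hbig
  exfalso
  have hne : ((cmES G S).powerset.filter (fun M => cmDisj M)).Nonempty :=
    ⟨∅, Finset.mem_filter.2 ⟨Finset.empty_mem_powerset _,
      fun e he => absurd he (Finset.notMem_empty e)⟩⟩
  obtain ⟨M, hMmem, hMmax⟩ := Finset.exists_max_image _ Finset.card hne
  have hMsub : M ⊆ cmES G S := Finset.mem_powerset.1 (Finset.mem_filter.1 hMmem).1
  have hMdisj : cmDisj M := (Finset.mem_filter.1 hMmem).2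
  have hMcard : M.card ≤ s := hmatch M hMsub hMdisj
  have key : ∀ M', M' ⊆ cmES G S → cmDisj M' → M'.card ≤ M.card := fun M' h1 h2 =>
    hMmax M' (Finset.mem_filter.2 ⟨Finset.mem_powerset.2 h1, h2⟩)
  set U := S.filter (fun v => ∀ e ∈ M, v ∉ e) with hUdef
  have hUS : U ⊆ S := Finset.filter_subset _ _
  -- independence of unmatched vertices
  have hUind : ∀ u ∈ U, ∀ w ∈ U, G.Adj u w → False := by
    intro u hu w hw hadj
    have huS := hUS hu; have hwS := hUS hw
    have huM : ∀ e ∈ M, u ∉ e := (Finset.mem_filter.1 hu).2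
    have hwM : ∀ e ∈ M, w ∉ e := (Finset.mem_filter.1 hw).2
    have hnotmem : s(u, w) ∉ M := fun h => huM _ h (Sym2.mem_mk_left u w)
    have hsub' : insert s(u, w) M ⊆ cmES G S :=
      Finset.insert_subset (mem_cmES'.2 ⟨hadj, huS, hwS⟩) hMsub
    have hdisj' : cmDisj (insert s(u, w) M) := by
      refine cmDisj_insert hMdisj ?_
      intro f hf v hv
      rcases Sym2.mem_iff.1 hv with rfl | rfl
      · exact huM f hf
      · exact hwM f hf
    have := key _ hsub' hdisj'
    rw [Finset.card_insert_of_notMem hnotmem] at this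
    omega
  -- augmenting
  have haug : ∀ u ∈ U, ∀ w ∈ U, u ≠ w → ∀ a b : V, s(a, b) ∈ M →
      G.Adj u a → G.Adj w b → False := by
    intro u hu w hw huw a b habM hua hwb
    have huS := hUS hu; have hwS := hUS hw
    have huM : ∀ e ∈ M, u ∉ e := (Finset.mem_filter.1 hu).2
    have hwM : ∀ e ∈ M, w ∉ e := (Finset.mem_filter.1 hw).2
    have habE : s(a, b) ∈ cmES G S := hMsub habM
    have hadj_ab : G.Adj a b := (mem_cmES'.1 habE).1
    have haS : a ∈ S := (mem_cmES'.1 habE).2.1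
    have hbS : b ∈ S := (mem_cmES'.1 habE).2.2
    have hab : a ≠ b := hadj_ab.ne
    have hub : u ≠ b := fun h => huM _ habM (h ▸ Sym2.mem_mk_right a b)
    have hwa : w ≠ a := fun h => hwM _ habM (h ▸ Sym2.mem_mk_left a b)
    set M0 := M.erase s(a, b) with hM0
    have hM0disj : cmDisj M0 := cmDisj_mono (Finset.erase_subset _ _) hMdisj
    have hbM0 : ∀ f ∈ M0, ∀ v ∈ s(w, b), v ∉ f := by
      intro f hf v hv
      have hfM : f ∈ M := Finset.mem_of_mem_erase hf
      have hfe : f ≠ s(a, b) := Finset.ne_of_mem_erase hf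
      rcases Sym2.mem_iff.1 hv with h | h
      · rw [h]; exact hwM f hfM
      · rw [h]; exact hMdisj _ habM f hfM (fun h2 => hfe h2.symm) _ (Sym2.mem_mk_right _ _)
    have hdisj1 : cmDisj (insert s(w, b) M0) := cmDisj_insert hM0disj hbM0
    have haM1 : ∀ f ∈ insert s(w, b) M0, ∀ v ∈ s(u, a), v ∉ f := by
      intro f hf v hv
      rcases Sym2.mem_iff.1 hv with h | h
      · rw [h]
        rcases Finset.mem_insert.1 hf with hf' | hf'
        · rw [hf']
          intro hvf
          rcases Sym2.mem_iff.1 hvf with h' | h'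
          · exact huw h'
          · exact hub h'
        · exact huM f (Finset.mem_of_mem_erase hf')
      · rw [h]
        rcases Finset.mem_insert.1 hf with hf' | hf'
        · rw [hf']
          intro hvf
          rcases Sym2.mem_iff.1 hvf with h' | h'
          · exact hwa h'.symm
          · exact hab h'
        · have hfM : f ∈ M := Finset.mem_of_mem_erase hf'
          have hfe : f ≠ s(a, b) := Finset.ne_of_mem_erase hf'
          exact hMdisj _ habM f hfM (fun h2 => hfe h2.symm) _ (Sym2.mem_mk_left _ _)
    have hdisj2 : cmDisj (insert s(u, a) (insert s(w, b) M0)) := cmDisj_insert hdisj1 haM1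
    have hsub2 : insert s(u, a) (insert s(w, b) M0) ⊆ cmES G S :=
      Finset.insert_subset (mem_cmES'.2 ⟨hua, huS, haS⟩)
        (Finset.insert_subset (mem_cmES'.2 ⟨hwb, hwS, hbS⟩)
          ((Finset.erase_subset _ _).trans hMsub))
    have hwbM0 : s(w, b) ∉ M0 :=
      fun h => hwM _ (Finset.mem_of_mem_erase h) (Sym2.mem_mk_left w b)
    have huaM1 : s(u, a) ∉ insert s(w, b) M0 := by
      intro h
      rcases Finset.mem_insert.1 h with h' | h'
      · rcases Sym2.eq_iff.1 h' with ⟨h1, -⟩ | ⟨h1, -⟩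
        · exact huw h1
        · exact hub h1
      · exact huM _ (Finset.mem_of_mem_erase h') (Sym2.mem_mk_left u a)
    have hM0card : M0.card = M.card - 1 := Finset.card_erase_of_mem habM
    have hMpos : 0 < M.card := Finset.card_pos.2 ⟨_, habM⟩
    have := key _ hsub2 hdisj2
    rw [Finset.card_insert_of_notMem huaM1, Finset.card_insert_of_notMem hwbM0, hM0card] at this
    omega
  -- U has at least two vertices
  have hmatched : (S.filter (fun v => ¬ (∀ e ∈ M, v ∉ e))).card ≤ 2 * M.card := by
    have hsub3 : S.filter (fun v => ¬ (∀ e ∈ M, v ∉ e)) ⊆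
        M.biUnion (fun e => univ.filter (fun v => v ∈ e)) := by
      intro x hx
      obtain ⟨-, hx2⟩ := Finset.mem_filter.1 hx
      push_neg at hx2
      obtain ⟨e, he, hxe⟩ := hx2
      exact Finset.mem_biUnion.2 ⟨e, he, Finset.mem_filter.2 ⟨Finset.mem_univ _, hxe⟩⟩
    calc (S.filter (fun v => ¬ (∀ e ∈ M, v ∉ e))).card
        ≤ (M.biUnion (fun e => univ.filter (fun v => v ∈ e))).card := Finset.card_le_card hsub3
      _ ≤ ∑ e ∈ M, (univ.filter (fun v => v ∈ e)).card := Finset.card_biUnion_le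
      _ = ∑ _e ∈ M, 2 :=
          Finset.sum_congr rfl (fun e he => cm_card_verts ((mem_cmES.1 (hMsub he)).1))
      _ = 2 * M.card := by rw [Finset.sum_const, smul_eq_mul, Nat.mul_comm]
  have hUcard : 2 ≤ U.card := by
    have hsplit := Finset.card_filter_add_card_filter_not
      (s := S) (p := fun v => ∀ e ∈ M, v ∉ e)
    rw [← hUdef] at hsplit
    omega
  obtain ⟨u, hu, w, hw, huw⟩ := Finset.one_lt_card.1 (by omega : 1 < U.card)
  -- degree bounded by per-edge counts
  have hdegsum : ∀ x ∈ U, cmDeg G S x ≤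
      ∑ e ∈ M, ((S.filter (fun y => G.Adj x y)).filter (fun y => y ∈ e)).card := by
    intro x hx
    have hsub4 : S.filter (fun y => G.Adj x y) ⊆
        M.biUnion (fun e => (S.filter (fun y => G.Adj x y)).filter (fun y => y ∈ e)) := by
      intro y hy
      obtain ⟨hyS, hyadj⟩ := Finset.mem_filter.1 hy
      by_cases hyU : ∀ e ∈ M, y ∉ e
      · exact absurd hyadj (fun h => hUind x hx y (Finset.mem_filter.2 ⟨hyS, hyU⟩) h)
      · push_neg at hyU
        obtain ⟨e, he, hye⟩ := hyU
        exact Finset.mem_biUnion.2 ⟨e, he, Finset.mem_filter.2 ⟨hy, hye⟩⟩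
    calc cmDeg G S x ≤ _ := Finset.card_le_card hsub4
      _ ≤ _ := Finset.card_biUnion_le
  -- per-edge bound
  have hperedge : ∀ e ∈ M,
      ((S.filter (fun y => G.Adj u y)).filter (fun y => y ∈ e)).card
      + ((S.filter (fun y => G.Adj w y)).filter (fun y => y ∈ e)).card ≤ 2 := by
    intro e
    induction e using Sym2.ind with
    | _ a b =>
    intro he
    have habE := hMsub he
    have hadj_ab : G.Adj a b := (mem_cmES'.1 habE).1
    have hab : a ≠ b := hadj_ab.ne
    by_contra hcon
    push_neg at hcon
    set Fu := (S.filter (fun y => G.Adj u y)).filter (fun y => y ∈ s(a, b)) with hFu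
    set Fw := (S.filter (fun y => G.Adj w y)).filter (fun y => y ∈ s(a, b)) with hFw
    have hFus : Fu ⊆ {a, b} := by
      intro x hx
      have := Sym2.mem_iff.1 (Finset.mem_filter.1 hx).2
      simp only [Finset.mem_insert, Finset.mem_singleton]
      exact this
    have hFws : Fw ⊆ {a, b} := by
      intro x hx
      have := Sym2.mem_iff.1 (Finset.mem_filter.1 hx).2
      simp only [Finset.mem_insert, Finset.mem_singleton]
      exact this
    have hcard2 : ({a, b} : Finset V).card = 2 := Finset.card_pair hab
    have hFuc : Fu.card ≤ 2 := hcard2 ▸ Finset.card_le_card hFus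
    have hFwc : Fw.card ≤ 2 := hcard2 ▸ Finset.card_le_card hFws
    have hadjFu : ∀ x ∈ Fu, G.Adj u x :=
      fun x hx => (Finset.mem_filter.1 (Finset.mem_filter.1 hx).1).2
    have hadjFw : ∀ x ∈ Fw, G.Adj w x :=
      fun x hx => (Finset.mem_filter.1 (Finset.mem_filter.1 hx).1).2
    have hmemFu : ∀ x ∈ Fu, x = a ∨ x = b :=
      fun x hx => Sym2.mem_iff.1 (Finset.mem_filter.1 hx).2
    have hmemFw : ∀ x ∈ Fw, x = a ∨ x = b :=
      fun x hx => Sym2.mem_iff.1 (Finset.mem_filter.1 hx).2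
    have hfull : ∀ F : Finset V, F ⊆ {a, b} → F.card = 2 → a ∈ F ∧ b ∈ F := by
      intro F hFs hFc
      have hEq : F = {a, b} := Finset.eq_of_subset_of_card_le hFs (by omega)
      constructor
      · rw [hEq]; exact Finset.mem_insert_self _ _
      · rw [hEq]; exact Finset.mem_insert_of_mem (Finset.mem_singleton_self _)
    rcases (by omega : Fu.card = 2 ∨ Fw.card = 2) with h2 | h2
    · obtain ⟨haF, hbF⟩ := hfull Fu hFus h2
      have hua : G.Adj u a := hadjFu a haF
      have hub : G.Adj u b := hadjFu b hbF
      obtain ⟨x, hx⟩ : Fw.Nonempty := Finset.card_pos.1 (by omega)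
      have hwx : G.Adj w x := hadjFw x hx
      rcases hmemFw x hx with rfl | rfl
      · exact haug w hw u hu huw.symm x b he hwx hub
      · exact haug u hu w hw huw a x he hua hwx
    · obtain ⟨haF, hbF⟩ := hfull Fw hFws h2
      have hwa : G.Adj w a := hadjFw a haF
      have hwb : G.Adj w b := hadjFw b hbF
      obtain ⟨x, hx⟩ : Fu.Nonempty := Finset.card_pos.1 (by omega)
      have hux : G.Adj u x := hadjFu x hx
      rcases hmemFu x hx with rfl | rfl
      · exact haug u hu w hw huw x b he hux hwb
      · exact haug w hw u hu huw.symm a x he hwa hux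
  -- final contradiction
  have hdu := hdegsum u hu
  have hdw := hdegsum w hw
  have hsum2 : (∑ e ∈ M, ((S.filter (fun y => G.Adj u y)).filter (fun y => y ∈ e)).card)
      + (∑ e ∈ M, ((S.filter (fun y => G.Adj w y)).filter (fun y => y ∈ e)).card)
      ≤ 2 * M.card := by
    rw [← Finset.sum_add_distrib]
    calc _ ≤ ∑ _e ∈ M, 2 := Finset.sum_le_sum hperedge
      _ = 2 * M.card := by rw [Finset.sum_const, smul_eq_mul, Nat.mul_comm]
  have hd1 : s < cmDeg G S u := hbig u (hUS hu)
  have hd2 : s < cmDeg G S w := hbig w (hUS hw)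
  omega

end Helpers3


section Final

attribute [local instance] Classical.propDecidable

variable {V : Type*} [Fintype V]

lemma cmDecomp (H : SimpleGraph V) (s : ℕ)
    (hno : ∀ M : Finset (Sym2 V), (∀ e ∈ M, e ∈ H.edgeSet) → cmDisj M →
      (∃ c : H.ConnectedComponent, ∀ e ∈ M, ∀ v ∈ e, H.connectedComponentMk v = c) →
      M.card ≤ s) :
    ∀ S : Finset V, (cmES H S).card ≤ s * S.card := by
  intro S
  induction S using Finset.strongInduction with
  | _ S IH =>
  rcases S.eq_empty_or_nonempty with rfl | ⟨v, hv⟩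
  · have hempty : cmES H (∅ : Finset V) = ∅ := by
      ext e
      induction e using Sym2.ind with
      | _ a b => simp [mem_cmES']
    simp [hempty]
  · set c := H.connectedComponentMk v with hc
    set Sc := S.filter (fun x => H.connectedComponentMk x = c) with hSc
    have hScS : Sc ⊆ S := Finset.filter_subset _ _
    have hvSc : v ∈ Sc := Finset.mem_filter.2 ⟨hv, rfl⟩
    have hssub : S \ Sc ⊂ S := by
      refine (Finset.ssubset_iff_of_subset Finset.sdiff_subset).2 ⟨v, hv, ?_⟩
      simp only [Finset.mem_sdiff, not_and, not_not]
      intro _; exact hvSc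
    have ih := IH _ hssub
    have hA : (cmES H Sc).card ≤ s * Sc.card := by
      apply cmKey
      intro M hM hd
      apply hno M (fun e he => (mem_cmES.1 (hM he)).1) hd
      exact ⟨c, fun e he w hw => (Finset.mem_filter.1 ((mem_cmES.1 (hM he)).2 w hw)).2⟩
    have hsplit : ∀ e ∈ cmES H S, e ∈ cmES H Sc ∪ cmES H (S \ Sc) := by
      intro e
      induction e using Sym2.ind with
      | _ a b =>
      intro he
      rw [mem_cmES'] at he
      obtain ⟨hadj, haS, hbS⟩ := he
      have hcc : H.connectedComponentMk a = H.connectedComponentMk b :=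
        SimpleGraph.ConnectedComponent.sound hadj.reachable
      by_cases hca : H.connectedComponentMk a = c
      · exact Finset.mem_union_left _ (mem_cmES'.2 ⟨hadj,
          Finset.mem_filter.2 ⟨haS, hca⟩,
          Finset.mem_filter.2 ⟨hbS, hcc.symm.trans hca⟩⟩)
      · refine Finset.mem_union_right _ (mem_cmES'.2 ⟨hadj,
          Finset.mem_sdiff.2 ⟨haS, ?_⟩, Finset.mem_sdiff.2 ⟨hbS, ?_⟩⟩)
        · intro hmem; exact hca (Finset.mem_filter.1 hmem).2
        · intro hmem; exact hca (hcc.trans (Finset.mem_filter.1 hmem).2)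
    have hcards : Sc.card + (S \ Sc).card = S.card := by
      have := Finset.card_sdiff_add_card_eq_card hScS; omega
    calc (cmES H S).card ≤ (cmES H Sc ∪ cmES H (S \ Sc)).card :=
          Finset.card_le_card hsplit
      _ ≤ (cmES H Sc).card + (cmES H (S \ Sc)).card := Finset.card_union_le _ _
      _ ≤ s * Sc.card + s * (S \ Sc).card := Nat.add_le_add hA ih
      _ = s * S.card := by rw [← hcards, Nat.mul_add]

end Final

theorem stmt4 (n : ℕ) (hn : Even n) (hn0 : 0 < n)
    (V : Type*) [Fintype V] (H : SimpleGraph V)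
    (h : ¬ HasConnectedMatching H (n / 2)) :
    (H.edgeSet.ncard : ℝ) ≤ ((n : ℝ) - 2) / 2 * (Fintype.card V : ℝ) := by
  classical
  obtain ⟨m, rfl⟩ := hn
  have hm : 1 ≤ m := by omega
  have hhalf : (m + m) / 2 = m := by omega
  have hkey : (cmES H (univ : Finset V)).card ≤ (m - 1) * Fintype.card V := by
    have := cmDecomp H (m - 1) ?_ univ
    · simpa [Finset.card_univ] using this
    · intro M hedge hd hcomp
      by_contra hcon
      push_neg at hcon
      obtain ⟨M', hM'sub, hM'card⟩ := Finset.exists_subset_card_eq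
        (show m ≤ M.card by omega)
      apply h
      refine ⟨M', by rw [hM'card, hhalf], fun e he => hedge e (hM'sub he),
        cmDisj_mono hM'sub hd, ?_⟩
      obtain ⟨c, hcc⟩ := hcomp
      exact ⟨c, fun e he => hcc e (hM'sub he)⟩
  have hfin : H.edgeSet.Finite := Set.toFinite _
  have hcardeq : H.edgeSet.ncard = (cmES H (univ : Finset V)).card := by
    rw [Set.ncard_eq_toFinset_card _ hfin]
    congr 1
    ext e
    rw [Set.Finite.mem_toFinset, mem_cmES]
    exact ⟨fun h1 => ⟨h1, fun w _ => Finset.mem_univ w⟩, fun h1 => h1.1⟩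
  rw [hcardeq]
  have hR : ((cmES H (univ : Finset V)).card : ℝ) ≤ ((m - 1 : ℕ) : ℝ) * (Fintype.card V : ℝ) := by
    exact_mod_cast hkey
  rw [Nat.cast_sub hm] at hR
  push_cast
  have hcV : (0 : ℝ) ≤ (Fintype.card V : ℝ) := Nat.cast_nonneg _
  have heq : ((m : ℝ) + m - 2) / 2 * (Fintype.card V : ℝ)
      = ((m : ℝ) - 1) * (Fintype.card V : ℝ) := by ring
  push_cast at hR
  linarith
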